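/- Let A be an Artin algebra and let 0 → M_n → M_{n-1} → ⋯ → M₀ → X → 0 be an exact sequence of finitely generated A-modules. Then X ∈ [⊕_{i=0}^n Ω^{-i}(M_i)]_{n+1}, where Ω^{-i} denotes the i-th cosyzygy. -/

import Mathlib

open CategoryTheory

universe u

namespace Paper

variable (A : Type u) [Ring A]

/-- A short exact sequence `0 → X → Y → Z → 0` of `A`-modules. -/
def SES (X Y Z : ModuleCat.{u} A) : Prop :=
  ∃ (f : X →ₗ[A] Y) (g : Y →ₗ[A] Z),
    Function.Injective f ∧ Function.Surjective g ∧ LinearMap.range f = LinearMap.ker g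

/-- `M` is a direct summand of `X`. -/
def IsSummand (M X : ModuleCat.{u} A) : Prop :=
  ∃ (i : M →ₗ[A] X) (r : X →ₗ[A] M), r.comp i = LinearMap.id

/-- The additive closure `add 𝒯`: direct summands of finite direct sums of objects of `𝒯`. -/
def addClosure (T : Set (ModuleCat.{u} A)) : Set (ModuleCat.{u} A) :=
  { M | ∃ (n : ℕ) (f : Fin n → ModuleCat.{u} A), (∀ j, f j ∈ T) ∧
      IsSummand A M (ModuleCat.of A (∀ j, (f j : Type u))) }

/-- The extension product `𝒞 • 𝒟`: (summands of) extensions of a module of `𝒟`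
by a module of `𝒞`. -/
def bullet (C D : Set (ModuleCat.{u} A)) : Set (ModuleCat.{u} A) :=
  addClosure A { X | ∃ C' ∈ C, ∃ D' ∈ D, SES A C' X D' }

/-- `[𝒯]ₙ`, defined by `[𝒯]₀ = {0}`, `[𝒯]₁ = add 𝒯` and `[𝒯]ₙ = [𝒯]₁ • [𝒯]ₙ₋₁`. -/
def bracket (T : Set (ModuleCat.{u} A)) : ℕ → Set (ModuleCat.{u} A)
  | 0 => { M | ∀ x : M, x = 0 }
  | 1 => addClosure A T
  | n + 2 => bullet A (addClosure A T) (bracket T (n + 1))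

/-- The class `𝒯₁ ⊕ 𝒯₂ = {X ⊕ Y | X ∈ 𝒯₁, Y ∈ 𝒯₂}`. -/
def setSum (T1 T2 : Set (ModuleCat.{u} A)) : Set (ModuleCat.{u} A) :=
  { M | ∃ X ∈ T1, ∃ Y ∈ T2, Nonempty ((M : Type u) ≃ₗ[A] (↥X × ↥Y)) }

/-- The extension dimension of a subcategory `𝒞` of `A`-mod:
the least `n` such that `𝒞 ⊆ [T]_{n+1}` for some finitely generated module `T`. -/
noncomputable def ed (C : Set (ModuleCat.{u} A)) : ℕ∞ :=
  sInf { n : ℕ∞ | ∃ m : ℕ, n = (m : ℕ∞) ∧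
    ∃ T : ModuleCat.{u} A, Module.Finite A T ∧ C ⊆ bracket A {T} (m + 1) }

/-- The category `Ωⁿ(A-mod)` of `n`-th syzygy modules: finitely generated `K` admitting
an exact sequence `0 → K → P⁰ → ⋯ → P^{n-1} → M → 0` with all `Pⁱ` projective,
encoded by a chain of short exact sequences. -/
def SyzCat (n : ℕ) : Set (ModuleCat.{u} A) :=
  { K | Module.Finite A K ∧
    ∃ (Ks : Fin (n + 1) → ModuleCat.{u} A) (P : Fin n → ModuleCat.{u} A),
      Ks 0 = K ∧ (∀ i, Module.Finite A (Ks i)) ∧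
      (∀ i, Module.Finite A (P i) ∧ Module.Projective A (P i)) ∧
      ∀ i : Fin n, SES A (Ks i.castSucc) (P i) (Ks i.succ) }

/-- The category `Ω^∞(A-mod)` of infinite syzygy modules: finitely generated `K` admitting
an exact sequence `0 → K → P⁰ → P¹ → ⋯` with all `Pⁱ` projective. -/
def InfSyzCat : Set (ModuleCat.{u} A) :=
  { K | Module.Finite A K ∧
    ∃ Ks P : ℕ → ModuleCat.{u} A,
      Ks 0 = K ∧ (∀ i, Module.Finite A (Ks i)) ∧
      (∀ i, Module.Finite A (P i) ∧ Module.Projective A (P i)) ∧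
      ∀ i : ℕ, SES A (Ks i) (P i) (Ks (i + 1)) }

/-- A submodule is superfluous (small). -/
def Superfluous {M : ModuleCat.{u} A} (N : Submodule A M) : Prop :=
  ∀ N' : Submodule A M, N ⊔ N' = ⊤ → N' = ⊤

/-- `K` is the (minimal) syzygy `Ω(M)`: the kernel of a projective cover `P → M`. -/
def IsSyzygyOf (K M : ModuleCat.{u} A) : Prop :=
  ∃ (P : ModuleCat.{u} A) (i : K →ₗ[A] P) (p : P →ₗ[A] M),
    Module.Projective A P ∧ Function.Injective i ∧ Function.Surjective p ∧
    LinearMap.range i = LinearMap.ker p ∧ Superfluous A (LinearMap.ker p)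

/-- `K ≅ Ωⁿ(M)`. -/
def IsIterSyzygyOf : ℕ → ModuleCat.{u} A → ModuleCat.{u} A → Prop
  | 0, K, M => Nonempty ((K : Type u) ≃ₗ[A] M)
  | n + 1, K, M => ∃ L, IsIterSyzygyOf n L M ∧ IsSyzygyOf A K L

/-- A submodule is essential. -/
def EssentialIn {M : ModuleCat.{u} A} (N : Submodule A M) : Prop :=
  ∀ N' : Submodule A M, N ⊓ N' = ⊥ → N' = ⊥

/-- `C` is the cosyzygy `Ω⁻¹(M)`: the cokernel of an injective envelope `M → I`. -/
def IsCosyzygyOf (C M : ModuleCat.{u} A) : Prop :=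
  ∃ (I : ModuleCat.{u} A) (j : M →ₗ[A] I) (q : I →ₗ[A] C),
    Module.Injective A I ∧ Function.Injective j ∧ Function.Surjective q ∧
    LinearMap.range j = LinearMap.ker q ∧ EssentialIn A (LinearMap.range j)

/-- `C ≅ Ω⁻ⁿ(M)`. -/
def IsIterCosyzygyOf : ℕ → ModuleCat.{u} A → ModuleCat.{u} A → Prop
  | 0, C, M => Nonempty ((C : Type u) ≃ₗ[A] M)
  | n + 1, C, M => ∃ L, IsIterCosyzygyOf n L M ∧ IsCosyzygyOf A C L

/-- An exact sequence `0 → M n → M (n-1) → ⋯ → M 0 → X → 0`, encoded by splicing: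
there are modules `K i` with `K 0 = X`, `K (n+1) = 0` and short exact sequences
`0 → K (i+1) → M i → K i → 0`. -/
def LongExact (n : ℕ) (M : Fin (n + 1) → ModuleCat.{u} A) (X : ModuleCat.{u} A) : Prop :=
  ∃ K : Fin (n + 2) → ModuleCat.{u} A,
    K 0 = X ∧ (∀ x : (K (Fin.last (n + 1)) : Type u), x = 0) ∧
    ∀ i : Fin (n + 1), SES A (K i.succ) (M i) (K i.castSucc)


/-! ### Auxiliary machinery -/

section Aux

variable {A}

/-- Elementwise characterization of essentiality. -/
theorem essentialIn_iff {X : ModuleCat.{u} A} (N : Submodule A X) :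
    EssentialIn A N ↔ ∀ x : (X : Type u), x ≠ 0 → ∃ a : A, a • x ∈ N ∧ a • x ≠ 0 := by
  constructor
  · intro h x hx
    by_contra hc
    push_neg at hc
    have h1 : N ⊓ Submodule.span A {x} = ⊥ := by
      rw [Submodule.eq_bot_iff]
      intro y hy
      rw [Submodule.mem_inf, Submodule.mem_span_singleton] at hy
      obtain ⟨hyN, hy2⟩ := hy
      obtain ⟨a, rfl⟩ := hy2
      exact hc a hyN
    have h2 := h _ h1
    have h3 : x ∈ (⊥ : Submodule A X) := h2 ▸ Submodule.mem_span_singleton_self x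
    exact hx (by simpa using h3)
  · intro h N' hN'
    rw [Submodule.eq_bot_iff]
    intro y hy
    by_contra hy0
    obtain ⟨a, haN, ha0⟩ := h y hy0
    have hmem : a • y ∈ N ⊓ N' := ⟨haN, N'.smul_mem a hy⟩
    rw [hN'] at hmem
    exact ha0 (by simpa using hmem)

theorem inj_retract {Q M : Type u} [AddCommGroup Q] [Module A Q] [AddCommGroup M] [Module A M]
    (hQ : Module.Injective A Q) (i : M →ₗ[A] Q) (r : Q →ₗ[A] M)
    (hri : ∀ m, r (i m) = m) : Module.Injective A M where
  out X Y _ _ _ _ f hf g := by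
    obtain ⟨h, hh⟩ := hQ.out f hf (i.comp g)
    refine ⟨r.comp h, fun x => ?_⟩
    have := hh x
    simp only [LinearMap.comp_apply] at this ⊢
    rw [this, hri]

theorem inj_equiv {Q M : Type u} [AddCommGroup Q] [Module A Q] [AddCommGroup M] [Module A M]
    (hQ : Module.Injective A Q) (e : Q ≃ₗ[A] M) : Module.Injective A M :=
  inj_retract hQ (e.symm : M →ₗ[A] Q) (e : Q →ₗ[A] M) (fun m => e.apply_symm_apply m)

theorem inj_prod {I J : Type u} [AddCommGroup I] [Module A I] [AddCommGroup J] [Module A J]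
    (hI : Module.Injective A I) (hJ : Module.Injective A J) :
    Module.Injective A (I × J) where
  out X Y _ _ _ _ f hf g := by
    obtain ⟨h1, hh1⟩ := hI.out f hf ((LinearMap.fst A I J).comp g)
    obtain ⟨h2, hh2⟩ := hJ.out f hf ((LinearMap.snd A I J).comp g)
    refine ⟨h1.prod h2, fun x => ?_⟩
    have e1 := hh1 x; have e2 := hh2 x
    simp only [LinearMap.comp_apply] at e1 e2
    exact Prod.ext e1 e2

/-- A retraction onto an injective submodule. -/
theorem retract_of_injective_submodule {Q : Type u} [AddCommGroup Q] [Module A Q]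
    (N : Submodule A Q) (h : Module.Injective A N) :
    ∃ r : Q →ₗ[A] N, ∀ n : N, r (n : Q) = n := by
  obtain ⟨r, hr⟩ := h.out N.subtype Subtype.coe_injective LinearMap.id
  exact ⟨r, fun n => hr n⟩


/-- Maximal essential extensions inside an injective module are injective. -/
theorem exists_hull_submodule {Q : Type u} [AddCommGroup Q] [Module A Q]
    (hQ : Module.Injective A Q) (N₀ : Submodule A Q) :
    ∃ N : Submodule A Q, N₀ ≤ N ∧ Module.Injective A N ∧
      (∀ x : Q, x ∈ N → x ≠ 0 → ∃ a : A, a • x ∈ N₀ ∧ a • x ≠ 0) := by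
  classical
  set S : Set (Submodule A Q) :=
    {P | N₀ ≤ P ∧ ∀ x : Q, x ∈ P → x ≠ 0 → ∃ a : A, a • x ∈ N₀ ∧ a • x ≠ 0} with hSdef
  have hN₀S : N₀ ∈ S := ⟨le_rfl, fun x hx hx0 => ⟨1, by simpa using hx, by simpa using hx0⟩⟩
  obtain ⟨N, hN₀N, hNS, hNmax⟩ : ∃ N, N₀ ≤ N ∧ N ∈ S ∧ ∀ z ∈ S, N ≤ z → z = N := by
    obtain ⟨N, hle, hmax⟩ := zorn_le_nonempty₀ S (fun c hcS hchain y hyc => by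
      refine ⟨sSup c, ⟨le_trans (hcS hyc).1 (le_sSup hyc), fun x hx hx0 => ?_⟩,
        fun z hz => le_sSup hz⟩
      obtain ⟨p, hpc, hxp⟩ := (Submodule.mem_sSup_of_directed ⟨y, hyc⟩ hchain.directedOn).mp hx
      exact (hcS hpc).2 x hxp hx0) N₀ hN₀S
    exact ⟨N, hle, hmax.1, fun z hz hNz => le_antisymm (hmax.2 hz hNz) hNz⟩
  -- find a maximal complement N'
  obtain ⟨N', hN'S2, hN'max⟩ : ∃ N' : Submodule A Q, N ⊓ N' = ⊥ ∧
      ∀ z : Submodule A Q, N ⊓ z = ⊥ → N' ≤ z → z = N' := by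
    obtain ⟨N', _, hmax⟩ := zorn_le_nonempty₀ {P : Submodule A Q | N ⊓ P = ⊥}
      (fun c hcS hchain y hyc => by
        refine ⟨sSup c, show N ⊓ sSup c = ⊥ from ?_, fun z hz => le_sSup hz⟩
        rw [Submodule.eq_bot_iff]
        intro x hx
        rw [Submodule.mem_inf] at hx
        obtain ⟨p, hpc, hxp⟩ :=
          (Submodule.mem_sSup_of_directed ⟨y, hyc⟩ hchain.directedOn).mp hx.2
        have : x ∈ N ⊓ p := Submodule.mem_inf.mpr ⟨hx.1, hxp⟩
        rw [hcS hpc] at this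
        simpa using this) ⊥ (by simp)
    exact ⟨N', hmax.1, fun z hz hN'z => le_antisymm (hmax.2 hz hN'z) hN'z⟩
  -- extend the inclusion N ↪ Q along N ↪ Q/N'
  have hf₁inj : Function.Injective ((N'.mkQ).comp N.subtype) := by
    intro m₁ m₂ hm
    have hd : (m₁ : Q) - (m₂ : Q) ∈ N' := by
      rw [← Submodule.Quotient.mk_eq_zero, ← Submodule.mkQ_apply, map_sub, sub_eq_zero]
      exact hm
    have h2 : (m₁ : Q) - (m₂ : Q) ∈ N ⊓ N' := ⟨sub_mem m₁.2 m₂.2, hd⟩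
    rw [hN'S2, Submodule.mem_bot] at h2
    exact Subtype.ext (sub_eq_zero.mp h2)
  obtain ⟨h, hh⟩ := hQ.out ((N'.mkQ).comp N.subtype) hf₁inj N.subtype
  have hh' : ∀ m : N, h (N'.mkQ (m : Q)) = (m : Q) := fun m => hh m
  -- essentiality of the image of N in Q/N'
  have ess : ∀ z : Q ⧸ N', z ≠ 0 → ∃ (a : A) (m : Q), m ∈ N ∧ m ≠ 0 ∧
      a • z = N'.mkQ m := by
    intro z hz
    obtain ⟨x, rfl⟩ := N'.mkQ_surjective z
    rw [Submodule.mkQ_apply] at hz ⊢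
    have hxN' : x ∉ N' := fun hx => hz (by simpa [Submodule.Quotient.mk_eq_zero] using hx)
    have hP : N ⊓ (N' ⊔ Submodule.span A {x}) ≠ ⊥ := by
      intro hbot
      have := hN'max _ hbot le_sup_left
      exact hxN' (this ▸ Submodule.mem_sup_right (Submodule.mem_span_singleton_self x))
    obtain ⟨m, hm, hm0⟩ := (Submodule.ne_bot_iff _).mp hP
    rw [Submodule.mem_inf] at hm
    obtain ⟨n', hn', s, hs, hmsum⟩ := Submodule.mem_sup.mp hm.2
    obtain ⟨a, rfl⟩ := Submodule.mem_span_singleton.mp hs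
    refine ⟨a, m, hm.1, hm0, ?_⟩
    rw [← Submodule.Quotient.mk_smul, ← sub_eq_zero, Submodule.mkQ_apply,
      ← Submodule.Quotient.mk_sub, Submodule.Quotient.mk_eq_zero]
    have : a • x - m = -n' := by rw [← hmsum]; abel
    rw [this]
    exact neg_mem hn'
  -- the range of h is all of N
  have hrange : ∀ z : Q ⧸ N', h z ∈ N := by
    have hmem : LinearMap.range h ∈ S := by
      constructor
      · intro x hx
        exact ⟨N'.mkQ x, by rw [hh' ⟨x, hN₀N hx⟩]⟩
      · rintro x ⟨z, rfl⟩ hx0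
        have hz0 : z ≠ 0 := fun hz => hx0 (by rw [hz, map_zero])
        obtain ⟨a, m, hmN, hm0, ha⟩ := ess z hz0
        have hax : a • h z = m := by
          rw [← map_smul, ha, hh' ⟨m, hmN⟩]
        obtain ⟨b, hb, hb0⟩ := hNS.2 m hmN hm0
        exact ⟨b * a, by rwa [mul_smul, hax], by rwa [mul_smul, hax]⟩
    have hle : N ≤ LinearMap.range h := fun n hn => ⟨N'.mkQ n, hh' ⟨n, hn⟩⟩
    have := hNmax _ hmem hle
    intro z
    rw [← this]
    exact ⟨z, rfl⟩
  refine ⟨N, hN₀N, ?_, hNS.2⟩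
  exact inj_retract hQ N.subtype
    ((LinearMap.codRestrict N h hrange).comp N'.mkQ)
    (fun m => Subtype.ext (hh' m))


/-- Every module embeds essentially into an injective module. -/
theorem exists_envelope (U : ModuleCat.{u} A) :
    ∃ (I : ModuleCat.{u} A) (j : U →ₗ[A] I), Module.Injective A I ∧
      Function.Injective j ∧ EssentialIn A (LinearMap.range j) := by
  let Qc : ModuleCat.{u} A := CategoryTheory.Injective.under U
  have hQinj : Module.Injective A Qc := by
    have h1 : CategoryTheory.Injective (ModuleCat.of A Qc) := by
      rw [ModuleCat.of_coe]
      exact CategoryTheory.Injective.injective_under U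
    exact Module.injective_module_of_injective_object A Qc
  let j₀ : (U : Type u) →ₗ[A] Qc := (CategoryTheory.Injective.ι U).hom
  have hj₀ : Function.Injective j₀ := by
    have : CategoryTheory.Mono (CategoryTheory.Injective.ι U) :=
      CategoryTheory.Injective.ι_mono U
    exact (ModuleCat.mono_iff_injective (CategoryTheory.Injective.ι U)).mp this
  obtain ⟨N, hle, hNinj, hess⟩ := exists_hull_submodule hQinj (LinearMap.range j₀)
  refine ⟨ModuleCat.of A N, LinearMap.codRestrict N j₀ (fun v => hle ⟨v, rfl⟩), hNinj, ?_, ?_⟩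
  · intro u₁ u₂ hu
    exact hj₀ (congrArg Subtype.val hu)
  · rw [essentialIn_iff]
    intro x hx
    have hx0 : x.1 ≠ 0 := fun h0 => hx (Subtype.ext h0)
    obtain ⟨a, ham, ha0⟩ := hess x.1 x.2 hx0
    obtain ⟨v, hv⟩ := ham
    refine ⟨a, ⟨v, Subtype.ext ?_⟩, fun hz => ha0 ?_⟩
    · exact hv
    · exact congrArg Subtype.val hz

/-- Existence of cosyzygies. -/
theorem cos_exists (M : ModuleCat.{u} A) : ∃ C, IsCosyzygyOf A C M := by
  obtain ⟨I, j, hI, hj, hess⟩ := exists_envelope M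
  exact ⟨ModuleCat.of A ((I : Type u) ⧸ LinearMap.range j), I, j,
    (LinearMap.range j).mkQ, hI, hj, (LinearMap.range j).mkQ_surjective,
    (Submodule.ker_mkQ _).symm, hess⟩

/-- The cokernel of an arbitrary injective embedding into an injective module
decomposes as (minimal cosyzygy) ⊕ (injective). -/
theorem cos_decomp {I U D : ModuleCat.{u} A} (hI : Module.Injective A (I : Type u))
    (u : (U : Type u) →ₗ[A] I) (hu : Function.Injective u)
    (q : (I : Type u) →ₗ[A] D) (hq : Function.Surjective q)
    (hker : LinearMap.ker q = LinearMap.range u) :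
    ∃ C J : ModuleCat.{u} A, IsCosyzygyOf A C U ∧ Module.Injective A (J : Type u) ∧
      Nonempty ((D : Type u) ≃ₗ[A] (↥C × ↥J)) := by
  obtain ⟨N, hle, hNinj, hess⟩ := exists_hull_submodule hI (LinearMap.range u)
  obtain ⟨r, hr⟩ := retract_of_injective_submodule N hNinj
  have hmem : ∀ v : (U : Type u), u v ∈ N := fun v => hle ⟨v, rfl⟩
  set u' : (U : Type u) →ₗ[A] N := LinearMap.codRestrict N u hmem with hu'def
  -- J := ker r is injective (it is a retract of I)
  have hrker : ∀ x : (I : Type u), x - ((r x : N) : (I : Type u)) ∈ LinearMap.ker r := by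
    intro x
    rw [LinearMap.mem_ker, map_sub, hr (r x), sub_self]
  set rr : (I : Type u) →ₗ[A] ↥(LinearMap.ker r) :=
    LinearMap.codRestrict (LinearMap.ker r) (LinearMap.id - N.subtype.comp r) (fun x => by
      simpa using hrker x) with hrrdef
  have hJinj : Module.Injective A ↥(LinearMap.ker r) := by
    refine inj_retract hI (LinearMap.ker r).subtype rr (fun k => Subtype.ext ?_)
    have hk : r (k : (I : Type u)) = 0 := k.2
    simp [hrrdef, hk]
  -- the two-component map
  set φ : (I : Type u) →ₗ[A] ((N ⧸ LinearMap.range u') × ↥(LinearMap.ker r)) :=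
    LinearMap.prod ((LinearMap.range u').mkQ.comp r) rr with hφdef
  have hφsurj : Function.Surjective φ := by
    rintro ⟨z, k⟩
    obtain ⟨n, rfl⟩ := (LinearMap.range u').mkQ_surjective z
    refine ⟨(n : (I : Type u)) + (k : (I : Type u)), ?_⟩
    have h1 : r ((n : (I : Type u)) + (k : (I : Type u))) = n := by
      rw [map_add, hr n, k.2, add_zero]
    have h2 : rr ((n : (I : Type u)) + (k : (I : Type u))) = k := by
      refine Subtype.ext ?_
      show ((n : (I : Type u)) + (k : (I : Type u)))
        - ((r ((n : (I : Type u)) + (k : (I : Type u))) : N) : (I : Type u)) = (k : (I : Type u))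
      rw [h1]
      abel
    have h3 : φ ((n : (I : Type u)) + (k : (I : Type u)))
        = ((LinearMap.range u').mkQ (r ((n : (I : Type u)) + (k : (I : Type u)))),
            rr ((n : (I : Type u)) + (k : (I : Type u)))) := rfl
    rw [h3, h1, h2]
  have hφker : LinearMap.ker φ = LinearMap.range u := by
    ext x
    constructor
    · intro hx
      rw [LinearMap.mem_ker] at hx
      have h1 : ((LinearMap.range u').mkQ (r x), rr x) = ((0 : N ⧸ LinearMap.range u'),
        (0 : ↥(LinearMap.ker r))) := hx
      have h2 : rr x = 0 := congrArg Prod.snd h1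
      have h3 : (LinearMap.range u').mkQ (r x) = 0 := congrArg Prod.fst h1
      rw [Submodule.mkQ_apply, Submodule.Quotient.mk_eq_zero] at h3
      obtain ⟨v, hv⟩ := h3
      have h4 : x = ((r x : N) : (I : Type u)) := by
        have h5 : x - ((r x : N) : (I : Type u)) = 0 := congrArg Subtype.val h2
        exact sub_eq_zero.mp h5
      refine ⟨v, ?_⟩
      have h6 : (u' v : (I : Type u)) = ((r x : N) : (I : Type u)) := congrArg Subtype.val hv
      rw [← h4] at h6
      exact h6
    · rintro ⟨v, rfl⟩
      rw [LinearMap.mem_ker]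
      have h1 : r (u v) = u' v := by
        refine Subtype.ext ?_
        exact congrArg Subtype.val (hr ⟨u v, hmem v⟩)
      have h2 : (LinearMap.range u').mkQ (r (u v)) = 0 := by
        rw [h1, Submodule.mkQ_apply, Submodule.Quotient.mk_eq_zero]
        exact ⟨v, rfl⟩
      have h3 : rr (u v) = 0 := by
        refine Subtype.ext ?_
        show u v - ((r (u v) : N) : (I : Type u)) = 0
        rw [h1]
        show u v - u v = 0
        rw [sub_self]
      have h4 : φ (u v) = ((LinearMap.range u').mkQ (r (u v)), rr (u v)) := rfl
      rw [h4, h2, h3]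
      rfl
  refine ⟨ModuleCat.of A (N ⧸ LinearMap.range u'), ModuleCat.of A ↥(LinearMap.ker r),
    ⟨ModuleCat.of A N, u', (LinearMap.range u').mkQ, hNinj, ?_, (LinearMap.range u').mkQ_surjective,
      (Submodule.ker_mkQ _).symm, ?_⟩, hJinj, ⟨?_⟩⟩
  · intro v₁ v₂ hv
    exact hu (congrArg Subtype.val hv)
  · rw [essentialIn_iff]
    intro x hx
    have hx0 : x.1 ≠ 0 := fun h0 => hx (Subtype.ext h0)
    obtain ⟨a, ⟨v, hv⟩, ha0⟩ := hess x.1 x.2 hx0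
    refine ⟨a, ⟨v, Subtype.ext (by exact hv)⟩, fun hz => ha0 ?_⟩
    exact congrArg Subtype.val hz
  · exact ((LinearMap.quotKerEquivOfSurjective q hq).symm.trans
      (Submodule.quotEquivOfEq _ _ (by rw [hker, hφker]))).trans
      (LinearMap.quotKerEquivOfSurjective φ hφsurj)


theorem cos_transport {C M M' : ModuleCat.{u} A} (h : IsCosyzygyOf A C M)
    (e : (M' : Type u) ≃ₗ[A] (M : Type u)) : IsCosyzygyOf A C M' := by
  obtain ⟨I, j, q, hI, hj, hq, hjq, hess⟩ := h
  refine ⟨I, j.comp (e : (M' : Type u) →ₗ[A] M), q, hI, hj.comp e.injective, hq, ?_, ?_⟩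
  · rw [← hjq]
    ext x
    constructor
    · rintro ⟨m, rfl⟩; exact ⟨e m, rfl⟩
    · rintro ⟨m, rfl⟩; exact ⟨e.symm m, by simp⟩
  · have : LinearMap.range (j.comp (e : (M' : Type u) →ₗ[A] M)) = LinearMap.range j := by
      ext x
      constructor
      · rintro ⟨m, rfl⟩; exact ⟨e m, rfl⟩
      · rintro ⟨m, rfl⟩; exact ⟨e.symm m, by simp⟩
    rw [this]
    exact hess

theorem cos_transport_left {C C' M : ModuleCat.{u} A} (h : IsCosyzygyOf A C M)
    (e : (C : Type u) ≃ₗ[A] (C' : Type u)) : IsCosyzygyOf A C' M := by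
  obtain ⟨I, j, q, hI, hj, hq, hjq, hess⟩ := h
  refine ⟨I, j, (e : (C : Type u) →ₗ[A] C').comp q, hI, hj, e.surjective.comp hq, ?_, hess⟩
  rw [hjq]
  ext x
  simp [LinearMap.mem_ker]

/-- Uniqueness of cosyzygies. -/
theorem cos_unique {C C' M M' : ModuleCat.{u} A} (h : IsCosyzygyOf A C M)
    (h' : IsCosyzygyOf A C' M') (e : (M : Type u) ≃ₗ[A] (M' : Type u)) :
    Nonempty ((C : Type u) ≃ₗ[A] (C' : Type u)) := by
  obtain ⟨I, j, q, hI, hj, hq, hjq, hess⟩ := h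
  obtain ⟨I', j', q', hI', hj', hq', hjq', hess'⟩ := h'
  obtain ⟨h, hh⟩ := hI'.out j hj (j'.comp ((e : (M : Type u) →ₗ[A] M')))
  have hh' : ∀ m : (M : Type u), h (j m) = j' (e m) := fun m => hh m
  rw [essentialIn_iff] at hess
  -- h is injective
  have hker : ∀ x : (I : Type u), h x = 0 → x = 0 := by
    intro x hx
    by_contra hx0
    obtain ⟨a, ⟨m, hm⟩, ha0⟩ := hess x hx0
    have h1 : h (a • x) = 0 := by rw [map_smul, hx, smul_zero]
    rw [← hm, hh'] at h1
    have h2 : e m = 0 := hj' (by simpa using h1)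
    have h3 : m = 0 := by simpa using congrArg e.symm h2
    rw [h3, map_zero] at hm
    exact ha0 hm.symm
  have hinj : Function.Injective h := by
    intro x y hxy
    have : h (x - y) = 0 := by rw [map_sub, hxy, sub_self]
    have := hker _ this
    exact sub_eq_zero.mp this
  -- h is surjective
  have hrangeinj : Module.Injective A ↥(LinearMap.range h) :=
    inj_equiv hI (LinearEquiv.ofInjective h hinj)
  obtain ⟨r, hr⟩ := retract_of_injective_submodule (LinearMap.range h) hrangeinj
  have hj'le : LinearMap.range j' ≤ LinearMap.range h := by
    rintro x ⟨m', rfl⟩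
    exact ⟨j (e.symm m'), by rw [hh', e.apply_symm_apply]⟩
  have hkerr : LinearMap.ker r = ⊥ := by
    have hbot : LinearMap.range j' ⊓ LinearMap.ker r = ⊥ := by
      rw [Submodule.eq_bot_iff]
      intro z hz
      rw [Submodule.mem_inf] at hz
      have hzr : z ∈ LinearMap.range h := hj'le hz.1
      have : r z = ⟨z, hzr⟩ := hr ⟨z, hzr⟩
      have h2 : (⟨z, hzr⟩ : ↥(LinearMap.range h)) = 0 := by
        rw [← this]
        exact hz.2
      exact congrArg Subtype.val h2
    exact hess' _ hbot
  have hsurj : Function.Surjective h := by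
    intro y
    have : y - ((r y : ↥(LinearMap.range h)) : (I' : Type u)) ∈ LinearMap.ker r := by
      rw [LinearMap.mem_ker, map_sub, hr (r y), sub_self]
    rw [hkerr, Submodule.mem_bot, sub_eq_zero] at this
    obtain ⟨x, hx⟩ := (r y).2
    exact ⟨x, by rw [hx, ← this]⟩
  -- assemble the equivalence on quotients
  have hmap : (LinearMap.range j).map (((LinearEquiv.ofBijective h ⟨hinj, hsurj⟩) :
      (I : Type u) ≃ₗ[A] (I' : Type u)) : (I : Type u) →ₗ[A] (I' : Type u))
      = LinearMap.range j' := by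
    ext x
    simp only [Submodule.mem_map, LinearEquiv.coe_coe, LinearEquiv.ofBijective_apply]
    constructor
    · rintro ⟨y, ⟨m, rfl⟩, rfl⟩
      exact ⟨e m, (hh' m).symm⟩
    · rintro ⟨m', rfl⟩
      exact ⟨j (e.symm m'), ⟨e.symm m', rfl⟩, by
        show h (j (e.symm m')) = j' m'
        rw [hh', e.apply_symm_apply]⟩
  refine ⟨((((LinearMap.quotKerEquivOfSurjective q hq).symm.trans
    (Submodule.quotEquivOfEq _ _ hjq.symm)).trans
    (Submodule.Quotient.equiv (LinearMap.range j) (LinearMap.range j')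
      (LinearEquiv.ofBijective h ⟨hinj, hsurj⟩) hmap)).trans
    (Submodule.quotEquivOfEq _ _ hjq')).trans
    (LinearMap.quotKerEquivOfSurjective q' hq')⟩

/-- A cosyzygy of `M` is also a cosyzygy of `M ⊕ J` for `J` injective. -/
theorem cos_prod_inj {C M J : ModuleCat.{u} A} (h : IsCosyzygyOf A C M)
    (hJ : Module.Injective A (J : Type u)) :
    IsCosyzygyOf A C (ModuleCat.of A (↥M × ↥J)) := by
  obtain ⟨I, j, q, hI, hj, hq, hjq, hess⟩ := h
  rw [essentialIn_iff] at hess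
  refine ⟨ModuleCat.of A (↥I × ↥J),
    j.prodMap LinearMap.id, q.comp (LinearMap.fst A (I : Type u) (J : Type u)),
    inj_prod hI hJ, ?_, ?_, ?_, ?_⟩
  · intro x y hxy
    have h1 : (j x.1, x.2) = (j y.1, y.2) := hxy
    obtain ⟨ha, hb⟩ := Prod.mk.inj h1
    exact Prod.ext (hj ha) hb
  · intro z
    obtain ⟨x, hx⟩ := hq z
    exact ⟨(x, 0), hx⟩
  · ext ⟨x, y⟩
    constructor
    · rintro ⟨⟨m, jj⟩, h1⟩
      have hx : j m = x := congrArg Prod.fst h1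
      rw [LinearMap.mem_ker]
      show q x = 0
      rw [← hx, ← LinearMap.mem_ker, ← hjq]
      exact ⟨m, rfl⟩
    · intro hxy
      rw [LinearMap.mem_ker] at hxy
      have : x ∈ LinearMap.ker q := hxy
      rw [← hjq] at this
      obtain ⟨m, rfl⟩ := this
      exact ⟨(m, y), rfl⟩
  · rw [essentialIn_iff]
    rintro ⟨x, y⟩ hxy
    by_cases hx : x = 0
    · have hy : y ≠ 0 := by
        intro hy
        exact hxy (by rw [hx, hy]; rfl)
      refine ⟨1, ⟨(0, y), ?_⟩, ?_⟩
      · show (j 0, y) = (1 : A) • (x, y)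
        rw [map_zero, hx, one_smul]
      intro hcon
      have : (1 : A) • y = 0 := congrArg Prod.snd hcon
      exact hy (by simpa using this)
    · obtain ⟨a, ⟨m, hm⟩, ha0⟩ := hess x hx
      refine ⟨a, ⟨(m, a • y), ?_⟩, ?_⟩
      · show (j m, a • y) = (a • x, a • y)
        rw [hm]
      · intro hcon
        exact ha0 (congrArg Prod.fst hcon)

theorem iter_transport {C M M' : ModuleCat.{u} A} (k : ℕ) (h : IsIterCosyzygyOf A k C M)
    (e : (M' : Type u) ≃ₗ[A] (M : Type u)) : IsIterCosyzygyOf A k C M' := by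
  induction k generalizing C with
  | zero => obtain ⟨e'⟩ := h; exact ⟨e'.trans e.symm⟩
  | succ k ih =>
    obtain ⟨L, hL, hcos⟩ := h
    exact ⟨L, ih hL, hcos⟩

theorem iter_transport_left {C C' M : ModuleCat.{u} A} (k : ℕ) (h : IsIterCosyzygyOf A k C M)
    (e : (C : Type u) ≃ₗ[A] (C' : Type u)) : IsIterCosyzygyOf A k C' M := by
  cases k with
  | zero => obtain ⟨e'⟩ := h; exact ⟨e.symm.trans e'⟩
  | succ k =>
    obtain ⟨L, hL, hcos⟩ := h
    exact ⟨L, hL, cos_transport_left hcos e⟩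

theorem iter_unique {C C' M M' : ModuleCat.{u} A} (k : ℕ) (h : IsIterCosyzygyOf A k C M)
    (h' : IsIterCosyzygyOf A k C' M') (e : (M : Type u) ≃ₗ[A] (M' : Type u)) :
    Nonempty ((C : Type u) ≃ₗ[A] (C' : Type u)) := by
  induction k generalizing C C' with
  | zero =>
    obtain ⟨e₁⟩ := h; obtain ⟨e₂⟩ := h'
    exact ⟨(e₁.trans e).trans e₂.symm⟩
  | succ k ih =>
    obtain ⟨L, hL, hcos⟩ := h
    obtain ⟨L', hL', hcos'⟩ := h'
    obtain ⟨eL⟩ := ih hL hL'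
    exact cos_unique hcos hcos' eL

theorem iter_comp {Z L M : ModuleCat.{u} A} (a b : ℕ) (h1 : IsIterCosyzygyOf A a Z L)
    (h2 : IsIterCosyzygyOf A b L M) : IsIterCosyzygyOf A (a + b) Z M := by
  induction a generalizing Z with
  | zero =>
    obtain ⟨e⟩ := h1
    rw [Nat.zero_add]
    exact iter_transport_left b h2 e.symm
  | succ a ih =>
    obtain ⟨W, hW, hcos⟩ := h1
    have : a + 1 + b = (a + b) + 1 := by omega
    rw [this]
    exact ⟨W, ih hW, hcos⟩

theorem cos_kill_inj {D E P J : ModuleCat.{u} A} (h : IsCosyzygyOf A D E)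
    (e : (E : Type u) ≃ₗ[A] (↥P × ↥J))
    (hJ : Module.Injective A (J : Type u)) : IsCosyzygyOf A D P := by
  obtain ⟨C', hC'⟩ := cos_exists P
  have h2 : IsCosyzygyOf A C' (ModuleCat.of A (↥P × ↥J)) :=
    cos_prod_inj hC' hJ
  have h3 : IsCosyzygyOf A D (ModuleCat.of A (↥P × ↥J)) :=
    cos_transport h e.symm
  obtain ⟨eDC⟩ := cos_unique h3 h2 (LinearEquiv.refl A _)
  exact cos_transport_left hC' eDC.symm

theorem iter_kill_inj {D E P J : ModuleCat.{u} A} (a : ℕ) (h : IsIterCosyzygyOf A (a + 1) D E)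
    (e : (E : Type u) ≃ₗ[A] (↥P × ↥J))
    (hJ : Module.Injective A (J : Type u)) : IsIterCosyzygyOf A (a + 1) D P := by
  induction a generalizing D with
  | zero =>
    obtain ⟨L, ⟨eL⟩, hcos⟩ := h
    have h1 : IsCosyzygyOf A D E := cos_transport hcos eL.symm
    exact ⟨P, ⟨LinearEquiv.refl A _⟩, cos_kill_inj h1 e hJ⟩
  | succ a ih =>
    obtain ⟨L, hL, hcos⟩ := h
    exact ⟨L, ih hL, hcos⟩


theorem exists_descend {V W : ModuleCat.{u} A} (g : (V : Type u) →ₗ[A] W)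
    (hg : Function.Surjective g) {T : Type u} [AddCommGroup T] [Module A T]
    (ψ : (V : Type u) →ₗ[A] T) (hle : LinearMap.ker g ≤ LinearMap.ker ψ) :
    ∃ k : (W : Type u) →ₗ[A] T, ∀ v, k (g v) = ψ v := by
  refine ⟨((LinearMap.ker g).liftQ ψ hle).comp
    ((LinearMap.quotKerEquivOfSurjective g hg).symm :
      (W : Type u) →ₗ[A] ((V : Type u) ⧸ LinearMap.ker g)), fun v => ?_⟩
  have h1 : (LinearMap.quotKerEquivOfSurjective g hg).symm (g v)
      = Submodule.Quotient.mk v := by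
    rw [LinearEquiv.symm_apply_eq]
    rfl
  simp only [LinearMap.comp_apply, LinearEquiv.coe_coe, h1, Submodule.liftQ_apply]

theorem ses_transport {U V W U' V' W' : ModuleCat.{u} A} (h : SES A U V W)
    (eU : (U : Type u) ≃ₗ[A] (U' : Type u)) (eV : (V : Type u) ≃ₗ[A] (V' : Type u))
    (eW : (W : Type u) ≃ₗ[A] (W' : Type u)) : SES A U' V' W' := by
  obtain ⟨f, g, hf, hg, hfg⟩ := h
  refine ⟨(eV : (V : Type u) →ₗ[A] V').comp (f.comp (eU.symm : (U' : Type u) →ₗ[A] U)),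
    (eW : (W : Type u) →ₗ[A] W').comp (g.comp (eV.symm : (V' : Type u) →ₗ[A] V)),
    ?_, ?_, ?_⟩
  · exact eV.injective.comp (hf.comp eU.symm.injective)
  · exact eW.surjective.comp (hg.comp eV.symm.surjective)
  · ext x
    simp only [LinearMap.mem_range, LinearMap.mem_ker, LinearMap.comp_apply,
      LinearEquiv.coe_coe]
    constructor
    · rintro ⟨u', rfl⟩
      rw [eV.symm_apply_apply]
      have : f (eU.symm u') ∈ LinearMap.ker g := hfg ▸ ⟨eU.symm u', rfl⟩
      rw [LinearMap.mem_ker] at this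
      rw [this, map_zero]
    · intro hx
      have h2 : g (eV.symm x) = 0 := by
        have := congrArg eW.symm hx
        simpa using this
      have h3 : eV.symm x ∈ LinearMap.ker g := h2
      rw [← hfg] at h3
      obtain ⟨u, hu⟩ := h3
      exact ⟨eU u, by rw [eU.symm_apply_apply, hu, eV.apply_symm_apply]⟩

theorem ses_zero_iso {Z V W : ModuleCat.{u} A} (h : SES A Z V W)
    (hZ : ∀ z : (Z : Type u), z = 0) : Nonempty ((V : Type u) ≃ₗ[A] (W : Type u)) := by
  obtain ⟨f, g, hf, hg, hfg⟩ := h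
  have hinj : Function.Injective g := by
    intro x y hxy
    have h1 : x - y ∈ LinearMap.ker g := by
      rw [LinearMap.mem_ker, map_sub, hxy, sub_self]
    rw [← hfg] at h1
    obtain ⟨z, hz⟩ := h1
    rw [hZ z, map_zero] at hz
    exact sub_eq_zero.mp hz.symm
  exact ⟨LinearEquiv.ofBijective g ⟨hinj, hg⟩⟩

/-- single rotation via pushout: from `0 → U → V → W → 0` obtain
`0 → V → W ⊕ I(U) → Ω⁻¹U → 0`. -/
theorem rot1 {U V W : ModuleCat.{u} A} (h : SES A U V W) :
    ∃ (E Q P J : ModuleCat.{u} A), SES A V E Q ∧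
      Nonempty ((E : Type u) ≃ₗ[A] (↥P × ↥J)) ∧ IsIterCosyzygyOf A 0 P W ∧
      Module.Injective A (J : Type u) ∧ IsCosyzygyOf A Q U := by
  obtain ⟨f, g, hf, hg, hfg⟩ := h
  obtain ⟨I, e, hI, he, hess⟩ := exists_envelope U
  obtain ⟨φ, hφ⟩ := hI.out f hf e
  set ψ : (V : Type u) →ₗ[A] ((I : Type u) ⧸ LinearMap.range e) :=
    (LinearMap.range e).mkQ.comp φ with hψdef
  have hle : LinearMap.ker g ≤ LinearMap.ker ψ := by
    intro v hv
    rw [← hfg] at hv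
    obtain ⟨x, rfl⟩ := hv
    rw [LinearMap.mem_ker]
    show ((LinearMap.range e).mkQ) (φ (f x)) = 0
    rw [hφ x, Submodule.mkQ_apply, Submodule.Quotient.mk_eq_zero]
    exact ⟨x, rfl⟩
  obtain ⟨k, hk⟩ := exists_descend g hg ψ hle
  refine ⟨ModuleCat.of A (↥W × ↥I), ModuleCat.of A ((I : Type u) ⧸ LinearMap.range e),
    W, I, ⟨LinearMap.prod g φ,
      (((LinearMap.range e).mkQ).comp (LinearMap.snd A ↥W ↥I))
        - (k.comp (LinearMap.fst A ↥W ↥I)), ?_, ?_, ?_⟩,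
    ⟨LinearEquiv.refl A _⟩, ⟨LinearEquiv.refl A _⟩, hI,
    I, e, (LinearMap.range e).mkQ, hI, he, (LinearMap.range e).mkQ_surjective,
    (Submodule.ker_mkQ _).symm, hess⟩
  · intro v₁ v₂ hv
    have h1 : (g v₁, φ v₁) = (g v₂, φ v₂) := hv
    obtain ⟨ha, hb⟩ := Prod.mk.inj h1
    have h2 : v₁ - v₂ ∈ LinearMap.ker g := by
      rw [LinearMap.mem_ker, map_sub, ha, sub_self]
    rw [← hfg] at h2
    obtain ⟨x, hx⟩ := h2
    have h3 : φ (v₁ - v₂) = 0 := by rw [map_sub, hb, sub_self]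
    rw [← hx, hφ] at h3
    have h4 : x = 0 := he (by simpa using h3)
    rw [h4, map_zero] at hx
    exact sub_eq_zero.mp hx.symm
  · intro z
    obtain ⟨x, rfl⟩ := (LinearMap.range e).mkQ_surjective z
    refine ⟨(0, x), ?_⟩
    show (LinearMap.range e).mkQ x - k 0 = (LinearMap.range e).mkQ x
    rw [map_zero, sub_zero]
  · ext ⟨w, x⟩
    constructor
    · rintro ⟨v, hv⟩
      obtain ⟨h1, h2⟩ := Prod.mk.inj hv
      rw [LinearMap.mem_ker]
      show (LinearMap.range e).mkQ x - k w = 0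
      rw [← h1, ← h2, hk v]
      exact sub_self _
    · intro hx
      rw [LinearMap.mem_ker] at hx
      have hx' : (LinearMap.range e).mkQ x - k w = 0 := hx
      obtain ⟨v₀, rfl⟩ := hg w
      rw [hk v₀] at hx'
      have h1 : x - φ v₀ ∈ LinearMap.range e := by
        rw [← Submodule.Quotient.mk_eq_zero, Submodule.Quotient.mk_sub, sub_eq_zero]
        exact sub_eq_zero.mp hx'
      obtain ⟨u, hu⟩ := h1
      refine ⟨v₀ + f u, ?_⟩
      have h2 : g (v₀ + f u) = g v₀ := by
        have h4 : f u ∈ LinearMap.ker g := hfg ▸ ⟨u, rfl⟩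
        rw [LinearMap.mem_ker] at h4
        rw [map_add, h4, add_zero]
      have h3 : φ (v₀ + f u) = x := by
        rw [map_add, hφ, hu]
        abel
      show (g (v₀ + f u), φ (v₀ + f u)) = (g v₀, x)
      rw [h2, h3]

/-- double rotation: from `0 → U → V → W → 0` obtain
`0 → W → Ω⁻¹U ⊕ J → Ω⁻¹V → 0`. -/
theorem lemA {U V W : ModuleCat.{u} A} (h : SES A U V W) :
    ∃ (E Q Cu J : ModuleCat.{u} A), SES A W E Q ∧
      Nonempty ((E : Type u) ≃ₗ[A] (↥Cu × ↥J)) ∧ IsCosyzygyOf A Cu U ∧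
      Module.Injective A (J : Type u) ∧ IsCosyzygyOf A Q V := by
  obtain ⟨f, g, hf, hg, hfg⟩ := h
  obtain ⟨I, e, hI, he, hess⟩ := exists_envelope V
  set u₂ : (U : Type u) →ₗ[A] I := e.comp f with hu₂def
  have hu₂ : Function.Injective u₂ := he.comp hf
  set ψ : (V : Type u) →ₗ[A] ((I : Type u) ⧸ LinearMap.range u₂) :=
    (LinearMap.range u₂).mkQ.comp e with hψdef
  have hle : LinearMap.ker g ≤ LinearMap.ker ψ := by
    intro v hv
    rw [← hfg] at hv
    obtain ⟨x, rfl⟩ := hv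
    rw [LinearMap.mem_ker]
    show ((LinearMap.range u₂).mkQ) (e (f x)) = 0
    rw [Submodule.mkQ_apply, Submodule.Quotient.mk_eq_zero]
    exact ⟨x, rfl⟩
  obtain ⟨k, hk⟩ := exists_descend g hg ψ hle
  have hrle : LinearMap.range u₂ ≤ LinearMap.range e := fun x => by
    rintro ⟨u, rfl⟩
    exact ⟨f u, rfl⟩
  obtain ⟨Cu, J, hCu, hJ, ⟨eE⟩⟩ := cos_decomp
    (D := ModuleCat.of A ((I : Type u) ⧸ LinearMap.range u₂)) hI u₂ hu₂ (LinearMap.range u₂).mkQ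
    (LinearMap.range u₂).mkQ_surjective (Submodule.ker_mkQ _)
  refine ⟨ModuleCat.of A ((I : Type u) ⧸ LinearMap.range u₂),
    ModuleCat.of A ((I : Type u) ⧸ LinearMap.range e), Cu, J,
    ⟨k, Submodule.mapQ (LinearMap.range u₂) (LinearMap.range e) LinearMap.id
      (fun x hx => hrle hx), ?_, ?_, ?_⟩, ⟨eE⟩, hCu, hJ,
    I, e, (LinearMap.range e).mkQ, hI, he, (LinearMap.range e).mkQ_surjective,
    (Submodule.ker_mkQ _).symm, hess⟩
  · intro w₁ w₂ hw
    obtain ⟨v₁, rfl⟩ := hg w₁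
    obtain ⟨v₂, rfl⟩ := hg w₂
    have hw2 : ψ v₁ = ψ v₂ := by
      rw [← hk v₁, ← hk v₂]
      exact hw
    have h1 : e v₁ - e v₂ ∈ LinearMap.range u₂ := by
      rw [← Submodule.Quotient.mk_eq_zero, Submodule.Quotient.mk_sub, sub_eq_zero]
      exact hw2
    obtain ⟨x, hx⟩ := h1
    have h2 : v₁ - v₂ = f x := by
      apply he
      rw [map_sub]
      exact hx.symm ▸ rfl
    have h3 : g (v₁ - v₂) = 0 := by
      rw [h2]
      have : f x ∈ LinearMap.ker g := hfg ▸ ⟨x, rfl⟩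
      rwa [LinearMap.mem_ker] at this
    rw [map_sub, sub_eq_zero] at h3
    exact h3
  · intro z
    obtain ⟨x, rfl⟩ := (LinearMap.range e).mkQ_surjective z
    refine ⟨(LinearMap.range u₂).mkQ x, ?_⟩
    show Submodule.mapQ (LinearMap.range u₂) (LinearMap.range e) LinearMap.id
      (fun x hx => hrle hx) ((LinearMap.range u₂).mkQ x) = (LinearMap.range e).mkQ x
    rw [Submodule.mkQ_apply, Submodule.mapQ_apply]
    rfl
  · ext z
    simp only [LinearMap.mem_range, LinearMap.mem_ker]
    constructor
    · rintro ⟨w, rfl⟩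
      obtain ⟨v, rfl⟩ := hg w
      show Submodule.mapQ (LinearMap.range u₂) (LinearMap.range e) LinearMap.id
        (fun x hx => hrle hx) (k (g v)) = 0
      rw [hk v]
      show Submodule.mapQ (LinearMap.range u₂) (LinearMap.range e) LinearMap.id
        (fun x hx => hrle hx) (Submodule.Quotient.mk (e v)) = 0
      rw [Submodule.mapQ_apply, LinearMap.id_apply, Submodule.Quotient.mk_eq_zero]
      exact ⟨v, rfl⟩
    · intro hz
      obtain ⟨x, rfl⟩ := (LinearMap.range u₂).mkQ_surjective z
      have hz2 : Submodule.mapQ (LinearMap.range u₂) (LinearMap.range e) LinearMap.id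
        (fun x hx => hrle hx) (Submodule.Quotient.mk x) = 0 := hz
      rw [Submodule.mapQ_apply, LinearMap.id_apply,
        Submodule.Quotient.mk_eq_zero] at hz2
      obtain ⟨v, rfl⟩ := hz2
      refine ⟨g v, ?_⟩
      show k (g v) = (LinearMap.range u₂).mkQ (e v)
      rw [hk v]
      rfl


theorem cos_iter1 {C M : ModuleCat.{u} A} (h : IsCosyzygyOf A C M) :
    IsIterCosyzygyOf A 1 C M := ⟨M, ⟨LinearEquiv.refl A _⟩, h⟩

theorem cos_cos_iter2 {C D M : ModuleCat.{u} A} (h1 : IsCosyzygyOf A C M)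
    (h2 : IsCosyzygyOf A D C) : IsIterCosyzygyOf A 2 D M :=
  ⟨C, cos_iter1 h1, h2⟩

/-- Triple rotation, shifting everything by `Ω⁻²`. -/
theorem shift3 {B E T : ModuleCat.{u} A} (h : SES A B E T) :
    ∃ B' E' T' Cm Jm : ModuleCat.{u} A, SES A B' E' T' ∧
      IsIterCosyzygyOf A 2 B' B ∧
      Nonempty ((E' : Type u) ≃ₗ[A] (↥Cm × ↥Jm)) ∧ Module.Injective A (Jm : Type u) ∧
      IsIterCosyzygyOf A 2 Cm E ∧ IsIterCosyzygyOf A 2 T' T := by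
  obtain ⟨m₁, t₁, CB, J₁, ses₁, ⟨e₁⟩, hCB, hJ₁, ht₁⟩ := lemA h
  obtain ⟨m₂, t₂, CT, J₂, ses₂, ⟨e₂⟩, hCT, hJ₂, ht₂⟩ := lemA ses₁
  obtain ⟨m₃, t₃, Ct₁, J₃, ses₃, ⟨e₃⟩, hCt₁, hJ₃, ht₃⟩ := lemA ses₂
  refine ⟨t₂, m₃, t₃, Ct₁, J₃, ses₃, ?_, ⟨e₃⟩, hJ₃, ?_, ?_⟩
  · exact ⟨CB, cos_iter1 hCB, cos_kill_inj ht₂ e₁ hJ₁⟩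
  · exact ⟨t₁, cos_iter1 ht₁, hCt₁⟩
  · exact ⟨CT, cos_iter1 hCT, cos_kill_inj ht₃ e₂ hJ₂⟩

/-- Main rotation lemma. -/
theorem rot : ∀ (a : ℕ) {U V W : ModuleCat.{u} A}, SES A U V W →
    ∃ S E Q P J : ModuleCat.{u} A, SES A S E Q ∧ IsIterCosyzygyOf A a S V ∧
      Nonempty ((E : Type u) ≃ₗ[A] (↥P × ↥J)) ∧ IsIterCosyzygyOf A a P W ∧
      Module.Injective A (J : Type u) ∧ IsIterCosyzygyOf A (a + 1) Q U
  | 0, U, V, W, h => by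
    obtain ⟨E, Q, P, J, ses, iso, hP, hJ, hQ⟩ := rot1 h
    exact ⟨V, E, Q, P, J, ses, ⟨LinearEquiv.refl A _⟩, iso, hP, hJ, cos_iter1 hQ⟩
  | 1, U, V, W, h => by
    obtain ⟨E₁, Q₁, Cu, J₁, ses₁, ⟨e₁⟩, hCu, hJ₁, hQ₁⟩ := lemA h
    obtain ⟨E₂, Q₂, CW, J₂, ses₂, ⟨e₂⟩, hCW, hJ₂, hQ₂⟩ := lemA ses₁
    exact ⟨Q₁, E₂, Q₂, CW, J₂, ses₂, cos_iter1 hQ₁, ⟨e₂⟩, cos_iter1 hCW, hJ₂,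
      cos_cos_iter2 hCu (cos_kill_inj hQ₂ e₁ hJ₁)⟩
  | (a+2), U, V, W, h => by
    obtain ⟨S, E, Q, P, J, ses, hS, ⟨eE⟩, hP, hJ, hQ⟩ := rot a h
    obtain ⟨B', E', T', Cm, Jm, ses', hB', ⟨eE'⟩, hJm, hCm, hT'⟩ := shift3 ses
    refine ⟨B', E', T', Cm, Jm, ses', ?_, ⟨eE'⟩, ?_, hJm, ?_⟩
    · have := iter_comp 2 a hB' hS
      have harith : 2 + a = a + 2 := by omega
      rwa [harith] at this
    · have h1 : IsIterCosyzygyOf A 2 Cm P := iter_kill_inj 1 hCm eE hJ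
      have := iter_comp 2 a h1 hP
      have harith : 2 + a = a + 2 := by omega
      rwa [harith] at this
    · have := iter_comp 2 (a + 1) hT' hQ
      have harith : 2 + (a + 1) = a + 2 + 1 := by omega
      rwa [harith] at this


theorem summand_of_iso {M N : ModuleCat.{u} A} (e : Nonempty ((M : Type u) ≃ₗ[A] (N : Type u))) :
    IsSummand A M N := by
  obtain ⟨e⟩ := e
  exact ⟨(e : (M : Type u) →ₗ[A] N), (e.symm : (N : Type u) →ₗ[A] M),
    LinearMap.ext fun x => e.symm_apply_apply x⟩

theorem summand_trans {M N P : ModuleCat.{u} A} (h1 : IsSummand A M N) (h2 : IsSummand A N P) :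
    IsSummand A M P := by
  obtain ⟨i1, r1, h1⟩ := h1
  obtain ⟨i2, r2, h2⟩ := h2
  refine ⟨i2.comp i1, r1.comp r2, LinearMap.ext fun x => ?_⟩
  have e2 : r2 (i2 (i1 x)) = i1 x := LinearMap.ext_iff.mp h2 (i1 x)
  have e1 : r1 (i1 x) = x := LinearMap.ext_iff.mp h1 x
  simp only [LinearMap.comp_apply, LinearMap.id_apply]
  rw [e2, e1]

theorem summand_prod_left {P J : ModuleCat.{u} A} :
    IsSummand A P (ModuleCat.of A (↥P × ↥J)) :=
  ⟨LinearMap.inl A ↥P ↥J, LinearMap.fst A ↥P ↥J, LinearMap.fst_comp_inl A ↥P ↥J⟩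

theorem mem_addClosure_self {T : Set (ModuleCat.{u} A)} {X : ModuleCat.{u} A} (hX : X ∈ T) :
    X ∈ addClosure A T := by
  refine ⟨1, fun _ => X, fun _ => hX, summand_of_iso ⟨?_⟩⟩
  exact (LinearEquiv.funUnique (Fin 1) A (X : Type u)).symm

theorem addClosure_summand {T : Set (ModuleCat.{u} A)} {M N : ModuleCat.{u} A}
    (h1 : IsSummand A M N) (h2 : N ∈ addClosure A T) : M ∈ addClosure A T := by
  obtain ⟨m, f, hf, hsum⟩ := h2
  exact ⟨m, f, hf, summand_trans h1 hsum⟩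

theorem bracket_summand {T : Set (ModuleCat.{u} A)} {M N : ModuleCat.{u} A} (m : ℕ)
    (h1 : IsSummand A M N) (h2 : N ∈ bracket A T (m + 1)) : M ∈ bracket A T (m + 1) := by
  cases m with
  | zero => exact addClosure_summand h1 h2
  | succ m => exact addClosure_summand h1 h2

/-- The key extension-closure property of the bracket. -/
theorem bracket_ext {T : Set (ModuleCat.{u} A)} {S E Q P : ModuleCat.{u} A} (m : ℕ)
    (ses : SES A S E Q) (hS : S ∈ addClosure A T) (hQ : Q ∈ bracket A T (m + 1))
    (hP : IsSummand A P E) : P ∈ bracket A T (m + 2) := by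
  have hE : E ∈ bullet A (addClosure A T) (bracket A T (m + 1)) :=
    mem_addClosure_self ⟨S, hS, Q, hQ, ses⟩
  show P ∈ bullet A (addClosure A T) (bracket A T (m + 1))
  exact addClosure_summand hP hE

theorem singleton_component_mem {n : ℕ} (C : Fin (n + 1) → ModuleCat.{u} A) (i : Fin (n + 1)) :
    IsSummand A (C i) (ModuleCat.of A (∀ j, (C j : Type u))) := by
  classical
  refine ⟨LinearMap.single A (fun j => (C j : Type u)) i,
    LinearMap.proj i, LinearMap.ext fun x => ?_⟩
  exact Pi.single_eq_same (M := fun j => ((C j : Type u))) i x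

end Aux

/-- Lemma 2.6: if `0 → M n → ⋯ → M 0 → X → 0` is exact in `A`-mod,
then `X ∈ [⊕ᵢ Ω⁻ⁱ(M i)]_{n+1}`. -/
theorem stmt2 (R : Type u) [CommRing R] [IsArtinianRing R]
    [Algebra R A] [Module.Finite R A]
    (n : ℕ) (M : Fin (n + 1) → ModuleCat.{u} A) (X : ModuleCat.{u} A)
    (hM : ∀ i, Module.Finite A (M i)) (hX : Module.Finite A X)
    (h : LongExact A n M X)
    (C : Fin (n + 1) → ModuleCat.{u} A)
    (hC : ∀ i : Fin (n + 1), IsIterCosyzygyOf A i (C i) (M i)) :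
    X ∈ bracket A {ModuleCat.of A (∀ i, (C i : Type u))} (n + 1) := by
  classical
  obtain ⟨K, hK0, hKlast, hses⟩ := h
  have main : ∀ d : ℕ, d ≤ n → ∀ Z : ModuleCat.{u} A,
      IsIterCosyzygyOf A (n - d) Z (K ⟨n - d, by omega⟩) →
      Z ∈ bracket A {ModuleCat.of A (∀ i, (C i : Type u))} (n + 1 - (n - d)) := by
    intro d
    induction d with
    | zero =>
      intro hd Z hZ
      have hses_n := hses ⟨n, by omega⟩
      have hsucceq : (⟨n, by omega⟩ : Fin (n + 1)).succ = Fin.last (n + 1) := Fin.ext rfl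
      rw [hsucceq] at hses_n
      have hiso : Nonempty ((M ⟨n, by omega⟩ : Type u)
          ≃ₗ[A] ((K (⟨n, by omega⟩ : Fin (n + 1)).castSucc : Type u))) :=
        ses_zero_iso hses_n hKlast
      have hcast : (⟨n, by omega⟩ : Fin (n + 1)).castSucc = (⟨n - 0, by omega⟩ : Fin (n + 2)) :=
        Fin.ext (show n = n - 0 by omega)
      rw [hcast] at hiso
      obtain ⟨e⟩ := hiso
      have hZM : IsIterCosyzygyOf A (n - 0) Z (M ⟨n, by omega⟩) := iter_transport _ hZ e
      have hCi : IsIterCosyzygyOf A (n - 0) (C ⟨n, by omega⟩) (M ⟨n, by omega⟩) := by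
        have h2 := hC ⟨n, by omega⟩
        have h3 : ((⟨n, by omega⟩ : Fin (n + 1)) : ℕ) = n - 0 := show n = n - 0 by omega
        rwa [h3] at h2
      obtain ⟨eZC⟩ := iter_unique _ hZM hCi (LinearEquiv.refl A _)
      have h1 : n + 1 - (n - 0) = 1 := by omega
      rw [h1]
      show Z ∈ addClosure A _
      exact addClosure_summand (summand_trans (summand_of_iso ⟨eZC⟩)
        (singleton_component_mem C ⟨n, by omega⟩)) (mem_addClosure_self rfl)
    | succ d ih =>
      intro hd Z hZ
      have hses_j := hses ⟨n - (d + 1), by omega⟩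
      obtain ⟨S, E, Q, P, J, ses, hS, ⟨eE⟩, hP, hJ, hQ⟩ := rot (n - (d + 1)) hses_j
      have hsucceq : (⟨n - (d + 1), by omega⟩ : Fin (n + 1)).succ
          = (⟨n - d, by omega⟩ : Fin (n + 2)) := Fin.ext (by show n - (d+1) + 1 = n - d; omega)
      rw [hsucceq] at hQ
      have hjd : n - (d + 1) + 1 = n - d := by omega
      rw [hjd] at hQ
      have hQmem := ih (by omega) Q hQ
      have he1 : n + 1 - (n - d) = d + 1 := by omega
      rw [he1] at hQmem
      have hCi : IsIterCosyzygyOf A (n - (d + 1)) (C ⟨n - (d + 1), by omega⟩)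
          (M ⟨n - (d + 1), by omega⟩) := hC ⟨n - (d + 1), by omega⟩
      obtain ⟨eSC⟩ := iter_unique _ hS hCi (LinearEquiv.refl A _)
      have hSadd : S ∈ addClosure A {ModuleCat.of A (∀ i, (C i : Type u))} :=
        addClosure_summand (summand_trans (summand_of_iso ⟨eSC⟩)
          (singleton_component_mem C ⟨n - (d + 1), by omega⟩)) (mem_addClosure_self rfl)
      have hPE : IsSummand A P E :=
        summand_trans summand_prod_left (summand_of_iso ⟨eE.symm⟩)
      have hPmem : P ∈ bracket A {ModuleCat.of A (∀ i, (C i : Type u))} (d + 2) :=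
        bracket_ext d ses hSadd hQmem hPE
      have hcast : (⟨n - (d + 1), by omega⟩ : Fin (n + 1)).castSucc
          = (⟨n - (d + 1), by omega⟩ : Fin (n + 2)) := Fin.ext rfl
      rw [hcast] at hP
      obtain ⟨eZP⟩ := iter_unique _ hZ hP (LinearEquiv.refl A _)
      have he2 : n + 1 - (n - (d + 1)) = d + 2 := by omega
      rw [he2]
      exact bracket_summand (d + 1) (summand_of_iso ⟨eZP⟩) hPmem
  have hnn : n - n = 0 := by omega
  have hfin0 : (⟨n - n, by omega⟩ : Fin (n + 2)) = 0 := Fin.ext (show n - n = 0 by omega)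
  have hX0 : IsIterCosyzygyOf A (n - n) X (K ⟨n - n, by omega⟩) := by
    rw [hfin0, hK0, hnn]
    exact ⟨LinearEquiv.refl A _⟩
  have hres := main n le_rfl X hX0
  have he3 : n + 1 - (n - n) = n + 1 := by omega
  rwa [he3] at hres

end Paper
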